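/- For d = 2, the cylinder set C_{a,b} of the nearest integer Jacobi–Perron map is nonempty if and only if |a| ≥ 2 and 0 ≤ |b| ≤ ⌈|a|/2⌉. -/
import Mathlib
set_option maxHeartbeats 1000000

private lemma le_ceil_half_iff (m n : ℤ) : n ≤ ⌈(m : ℝ) / 2⌉ ↔ 2 * n ≤ m + 1 := by
  rw [Int.le_ceil_iff]
  constructor
  · intro h
    have h2 : (2 * n : ℝ) - 2 < m := by linarith
    have h3 : 2 * n - 2 < m := by exact_mod_cast h2
    omega
  · intro h
    have h2 : (2 * n : ℝ) ≤ m + 1 := by exact_mod_cast h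
    linarith

private lemma nijp_construct (a b : ℤ) (r s : ℝ) (hr2 : 2 ≤ |r|) (hs : |s| ≤ |r| / 2)
    (hfa : ⌊r + 1/2⌋ = a) (hfb : ⌊s + 1/2⌋ = b) :
    ∃ x : ℝ × ℝ, x.1 ∈ Set.Icc (-(1/2) : ℝ) (1/2) ∧ x.2 ∈ Set.Icc (-(1/2) : ℝ) (1/2) ∧
        x.1 ≠ 0 ∧ ⌊1 / x.1 + 1/2⌋ = a ∧ ⌊x.2 / x.1 + 1/2⌋ = b := by
  have hrpos : (0 : ℝ) < |r| := by linarith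
  have hr0 : r ≠ 0 := by
    intro h; rw [h, abs_zero] at hrpos; exact lt_irrefl _ hrpos
  refine ⟨(1 / r, s / r), ?_, ?_, one_div_ne_zero hr0, ?_, ?_⟩
  · have h1 : |1 / r| ≤ 1 / 2 := by
      rw [abs_div, abs_one, div_le_div_iff₀ hrpos (by norm_num : (0:ℝ) < 2)]
      linarith
    exact Set.mem_Icc.mpr ⟨by have := (abs_le.mp h1).1; linarith, (abs_le.mp h1).2⟩
  · have h1 : |s / r| ≤ 1 / 2 := by
      rw [abs_div, div_le_div_iff₀ hrpos (by norm_num : (0:ℝ) < 2)]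
      linarith
    exact Set.mem_Icc.mpr ⟨by have := (abs_le.mp h1).1; linarith, (abs_le.mp h1).2⟩
  · rw [one_div_one_div]; exact hfa
  · have h1 : s / r / (1 / r) = s := by field_simp
    rw [h1]; exact hfb

theorem nijp_cylinder_nonempty (a b : ℤ) :
    (∃ x : ℝ × ℝ, x.1 ∈ Set.Icc (-(1/2) : ℝ) (1/2) ∧ x.2 ∈ Set.Icc (-(1/2) : ℝ) (1/2) ∧
        x.1 ≠ 0 ∧ ⌊1 / x.1 + 1/2⌋ = a ∧ ⌊x.2 / x.1 + 1/2⌋ = b)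
      ↔ (2 ≤ |a| ∧ 0 ≤ |b| ∧ |b| ≤ ⌈(|a| : ℝ) / 2⌉) := by
  constructor
  · rintro ⟨⟨x₁, x₂⟩, hx1, hx2, hne, hfa, hfb⟩
    simp only [Set.mem_Icc] at hx1 hx2
    obtain ⟨r, hr_def⟩ : ∃ r : ℝ, 1 / x₁ = r := ⟨_, rfl⟩
    obtain ⟨s, hs_def⟩ : ∃ s : ℝ, x₂ / x₁ = s := ⟨_, rfl⟩
    rw [hr_def] at hfa
    rw [hs_def] at hfb
    have hx1abs : |x₁| ≤ 1 / 2 := abs_le.mpr ⟨by linarith [hx1.1], hx1.2⟩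
    have hx1pos : (0 : ℝ) < |x₁| := abs_pos.mpr hne
    have hr2 : 2 ≤ |r| := by
      rw [← hr_def, abs_div, abs_one, le_div_iff₀ hx1pos]
      linarith
    have hs2 : |s| ≤ |r| / 2 := by
      have hsr : s = x₂ * r := by rw [← hs_def, ← hr_def]; field_simp
      rw [hsr, abs_mul]
      have hx2a : |x₂| ≤ 1 / 2 := abs_le.mpr ⟨by linarith [hx2.1], hx2.2⟩
      have := mul_le_mul_of_nonneg_right hx2a (abs_nonneg r)
      linarith
    obtain ⟨haf1, haf2⟩ := Int.floor_eq_iff.mp hfa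
    obtain ⟨hbf1, hbf2⟩ := Int.floor_eq_iff.mp hfb
    have hsle := le_abs_self s
    have hsge := neg_abs_le s
    have key : 4 ≤ 2 * |a| ∧ 4 * b ≤ 2 * |a| + 3 ∧ -(2 * |a|) - 3 ≤ 4 * b := by
      rcases le_or_gt 0 r with h | h
      · rw [abs_of_nonneg h] at hr2 hs2
        have h1 : (3 : ℝ) < 2 * a := by linarith
        have h2 : (4 : ℝ) * b < 2 * a + 3 := by linarith
        have h3 : -(2 * (a : ℝ)) - 3 < 4 * b := by linarith
        have h1' : (3 : ℤ) < 2 * a := by exact_mod_cast h1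
        have h2' : 4 * b < 2 * a + 3 := by exact_mod_cast h2
        have h3' : -(2 * a) - 3 < 4 * b := by exact_mod_cast h3
        rcases abs_cases a with ⟨he, _⟩ | ⟨he, _⟩ <;> omega
      · rw [abs_of_neg h] at hr2 hs2
        have h1 : 2 * (a : ℝ) ≤ -3 := by linarith
        have h2 : (4 : ℝ) * b ≤ -(2 * a) + 3 := by linarith
        have h3 : 2 * (a : ℝ) - 3 < 4 * b := by linarith
        have h1' : 2 * a ≤ -3 := by exact_mod_cast h1
        have h2' : 4 * b ≤ -(2 * a) + 3 := by exact_mod_cast h2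
        have h3' : 2 * a - 3 < 4 * b := by exact_mod_cast h3
        rcases abs_cases a with ⟨he, _⟩ | ⟨he, _⟩ <;> omega
    obtain ⟨k1, k2, k3⟩ := key
    refine ⟨by omega, abs_nonneg _, ?_⟩
    rw [← Int.cast_abs, le_ceil_half_iff]
    rcases abs_cases b with ⟨he, _⟩ | ⟨he, _⟩ <;> omega
  · rintro ⟨ha, -, hb⟩
    rw [← Int.cast_abs, le_ceil_half_iff] at hb
    have hb2 : 2 * |b| ≤ |a| + 1 := hb
    have ha' : a ≤ -2 ∨ 2 ≤ a := by
      rcases abs_cases a with ⟨he, _⟩ | ⟨he, _⟩ <;> omega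
    have hbabs : b ≤ |b| ∧ -|b| ≤ b := ⟨le_abs_self b, neg_abs_le b⟩
    rcases ha' with ha' | ha' <;> rcases le_or_gt 0 b with hbs | hbs
    -- a ≤ -2, b ≥ 0
    · have haR : (a : ℝ) ≤ -2 := by exact_mod_cast ha'
      have hbR : (0 : ℝ) ≤ b := by exact_mod_cast hbs
      have hbaR : 2 * (b : ℝ) ≤ -a + 1 := by
        have : 2 * b ≤ -a + 1 := by
          rcases abs_cases a with ⟨he, _⟩ | ⟨he, _⟩ <;>
          rcases abs_cases b with ⟨hf, _⟩ | ⟨hf, _⟩ <;> omega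
        exact_mod_cast this
      apply nijp_construct a b ((a : ℝ) - 3/8) ((b : ℝ) - 3/8)
      · rw [abs_of_neg (by linarith)]; linarith
      · rw [abs_le, abs_of_neg (show (a:ℝ) - 3/8 < 0 by linarith)]
        constructor <;> linarith
      · rw [Int.floor_eq_iff]
        constructor <;> push_cast <;> linarith
      · rw [Int.floor_eq_iff]
        constructor <;> push_cast <;> linarith
    -- a ≤ -2, b < 0
    · have haR : (a : ℝ) ≤ -2 := by exact_mod_cast ha'
      have hbR : (b : ℝ) ≤ -1 := by exact_mod_cast (by omega : b ≤ -1)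
      have hba2 : 2 * (-(b : ℝ)) ≤ -a + 1 := by
        have : 2 * (-b) ≤ -a + 1 := by
          rcases abs_cases a with ⟨he, _⟩ | ⟨he, _⟩ <;>
          rcases abs_cases b with ⟨hf, _⟩ | ⟨hf, _⟩ <;> omega
        exact_mod_cast this
      apply nijp_construct a b ((a : ℝ) - 3/8) ((b : ℝ) + 3/8)
      · rw [abs_of_neg (by linarith)]; linarith
      · rw [abs_le, abs_of_neg (show (a:ℝ) - 3/8 < 0 by linarith)]
        constructor <;> linarith
      · rw [Int.floor_eq_iff]
        constructor <;> push_cast <;> linarith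
      · rw [Int.floor_eq_iff]
        constructor <;> push_cast <;> linarith
    -- a ≥ 2, b ≥ 0
    · have haR : (2 : ℝ) ≤ a := by exact_mod_cast ha'
      have hbR : (0 : ℝ) ≤ b := by exact_mod_cast hbs
      have hbaR : 2 * (b : ℝ) ≤ a + 1 := by
        have : 2 * b ≤ a + 1 := by
          rcases abs_cases a with ⟨he, _⟩ | ⟨he, _⟩ <;>
          rcases abs_cases b with ⟨hf, _⟩ | ⟨hf, _⟩ <;> omega
        exact_mod_cast this
      apply nijp_construct a b ((a : ℝ) + 3/8) ((b : ℝ) - 3/8)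
      · rw [abs_of_pos (by linarith)]; linarith
      · rw [abs_le, abs_of_pos (show (0:ℝ) < (a:ℝ) + 3/8 by linarith)]
        constructor <;> linarith
      · rw [Int.floor_eq_iff]
        constructor <;> push_cast <;> linarith
      · rw [Int.floor_eq_iff]
        constructor <;> push_cast <;> linarith
    -- a ≥ 2, b < 0
    · have haR : (2 : ℝ) ≤ a := by exact_mod_cast ha'
      have hbR : (b : ℝ) ≤ -1 := by exact_mod_cast (by omega : b ≤ -1)
      have hba2 : 2 * (-(b : ℝ)) ≤ a + 1 := by
        have : 2 * (-b) ≤ a + 1 := by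
          rcases abs_cases a with ⟨he, _⟩ | ⟨he, _⟩ <;>
          rcases abs_cases b with ⟨hf, _⟩ | ⟨hf, _⟩ <;> omega
        exact_mod_cast this
      apply nijp_construct a b ((a : ℝ) + 3/8) ((b : ℝ) + 3/8)
      · rw [abs_of_pos (by linarith)]; linarith
      · rw [abs_le, abs_of_pos (show (0:ℝ) < (a:ℝ) + 3/8 by linarith)]
        constructor <;> linarith
      · rw [Int.floor_eq_iff]
        constructor <;> push_cast <;> linarith
      · rw [Int.floor_eq_iff]
        constructor <;> push_cast <;> linarith
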